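/- arXiv:1906.01591 — 6 statements merged into one kernel-verified Lean document; each statement's English description precedes it below -/
import Mathlib

section
/- Let G be a finite simple graph with Laplacian L and transition matrix U(t) = exp(itL). If there are distinct vertices c,d of G such that the pair state e_a − e_b (a ≠ b) has perfect pair state transfer to (c,d) at time τ, then (a,b) is periodic at time 2τ, i.e., U(2τ)(e_a − e_b) = γ(e_a − e_b) for some γ ∈ ℂ with |γ| = 1. -/
open Matrix

variable {V : Type*}

/-- The transition matrix `U(t) = exp(itL)` of the continuous quantum walk on `G`,
where `L` is the Laplacian of `G`. -/
noncomputable def transitionMatrix [Fintype V] [DecidableEq V] (G : SimpleGraph V)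
    [DecidableRel G.Adj] (t : ℝ) : Matrix V V ℂ :=
  NormedSpace.exp ((Complex.I * (t : ℂ)) • G.lapMatrix ℂ)

/-- The pair state `e_a - e_b`. -/
def pairState [DecidableEq V] (a b : V) : V → ℂ := Pi.single a 1 - Pi.single b 1

/-- Perfect pair state transfer from `(a,b)` to `(c,d)` at time `t`. -/
def PerfectPairStateTransfer [Fintype V] [DecidableEq V] (G : SimpleGraph V)
    [DecidableRel G.Adj] (t : ℝ) (a b c d : V) : Prop :=
  ∃ γ : ℂ, ‖γ‖ = 1 ∧
    (transitionMatrix G t).mulVec (pairState a b) = γ • pairState c d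

lemma pairState_real [DecidableEq V] (a b : V) (x : V) :
    star (pairState a b x) = pairState a b x := by
  simp [pairState, Pi.single_apply, apply_ite (star : ℂ → ℂ)]

lemma lap_herm [Fintype V] [DecidableEq V] (G : SimpleGraph V) [DecidableRel G.Adj] :
    (G.lapMatrix ℂ)ᴴ = G.lapMatrix ℂ := by
  have hs : (G.lapMatrix ℂ)ᵀ = G.lapMatrix ℂ := G.isSymm_lapMatrix (R := ℂ)
  ext i j
  simp only [conjTranspose_apply]
  rw [show (G.lapMatrix ℂ) j i = (G.lapMatrix ℂ)ᵀ i j from rfl, hs]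
  simp [SimpleGraph.lapMatrix, SimpleGraph.degMatrix, Matrix.diagonal_apply,
    apply_ite (star : ℂ → ℂ)]

lemma trans_symm [Fintype V] [DecidableEq V] (G : SimpleGraph V) [DecidableRel G.Adj] (τ : ℝ) :
    (transitionMatrix G τ)ᵀ = transitionMatrix G τ := by
  rw [transitionMatrix, ← Matrix.exp_transpose, transpose_smul,
    (G.isSymm_lapMatrix (R := ℂ) : (G.lapMatrix ℂ)ᵀ = G.lapMatrix ℂ)]

lemma trans_unitary [Fintype V] [DecidableEq V] (G : SimpleGraph V) [DecidableRel G.Adj]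
    (τ : ℝ) : star (transitionMatrix G τ) * transitionMatrix G τ = 1 := by
  have hstarU : star (transitionMatrix G τ)
      = NormedSpace.exp ((-(Complex.I * (τ:ℂ))) • G.lapMatrix ℂ) := by
    rw [transitionMatrix, star_eq_conjTranspose, ← Matrix.exp_conjTranspose,
      conjTranspose_smul, lap_herm]
    congr 1
    simp [Complex.ext_iff]
  have hcomm : Commute ((-(Complex.I * (τ:ℂ))) • G.lapMatrix ℂ)
      ((Complex.I * (τ:ℂ)) • G.lapMatrix ℂ) :=
    ((Commute.refl _).smul_left _).smul_right _
  rw [hstarU, transitionMatrix, ← Matrix.exp_add_of_commute _ _ hcomm]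
  rw [show (-(Complex.I * (τ:ℂ))) • G.lapMatrix ℂ + (Complex.I * (τ:ℂ)) • G.lapMatrix ℂ = 0 by
    rw [neg_smul, neg_add_cancel]]
  exact NormedSpace.exp_zero

lemma trans_double [Fintype V] [DecidableEq V] (G : SimpleGraph V) [DecidableRel G.Adj]
    (τ : ℝ) : transitionMatrix G (2 * τ) = transitionMatrix G τ * transitionMatrix G τ := by
  rw [transitionMatrix, transitionMatrix,
    ← Matrix.exp_add_of_commute _ _ (Commute.refl _), ← add_smul]
  congr 2
  push_cast
  ring

/-- If `e_a - e_b` has perfect pair state transfer to some `(c,d)` with `c ≠ d` at time `τ`,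
then `(a,b)` is periodic at time `2τ`. -/
theorem pst_implies_periodic [Fintype V] [DecidableEq V] (G : SimpleGraph V)
    [DecidableRel G.Adj] (a b : V) (hab : a ≠ b) (τ : ℝ)
    (h : ∃ c d : V, c ≠ d ∧ PerfectPairStateTransfer G τ a b c d) :
    PerfectPairStateTransfer G (2 * τ) a b a b := by

  obtain ⟨c, d, hcd, γ, hγ, hU⟩ := h
  have hγ0 : γ ≠ 0 := by
    intro h0; rw [h0] at hγ; simp at hγ
  have hγ1 : γ * star γ = 1 := by
    rw [show (star γ) = (starRingEnd ℂ) γ from rfl, Complex.mul_conj, Complex.normSq_eq_norm_sq,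
      hγ]
    norm_num
  have hstarγ : star γ = γ⁻¹ := eq_inv_of_mul_eq_one_right (mul_comm γ (star γ) ▸ hγ1)
  set U := transitionMatrix G τ with hUdef
  have h1 : (star U).mulVec (pairState c d) = γ⁻¹ • pairState a b := by
    have := congrArg (star U).mulVec hU
    rw [mulVec_mulVec, trans_unitary, one_mulVec, mulVec_smul] at this
    rw [this, smul_smul, inv_mul_cancel₀ hγ0, one_smul]
  have h2 : U.mulVec (pairState c d) = γ • pairState a b := by
    funext x
    have hx := congrFun h1 x
    have hconj : star (((star U).mulVec (pairState c d)) x)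
        = (U.mulVec (pairState c d)) x := by
      simp only [mulVec, dotProduct, star_eq_conjTranspose, conjTranspose_apply]
      rw [star_sum]
      congr 1
      funext y
      rw [star_mul', star_star, pairState_real]
      rw [show U x y = Uᵀ y x from rfl, trans_symm]
    rw [← hconj, hx]
    simp only [Pi.smul_apply, smul_eq_mul, star_mul', pairState_real, star_inv₀, hstarγ,
      inv_inv]
  refine ⟨γ * γ, by simp [_root_.map_mul, hγ], ?_⟩
  rw [trans_double, ← mulVec_mulVec, hU, mulVec_smul, h2, smul_smul]
end

section
/- If there is perfect pair state transfer between e_a − e_b and e_c − e_d in a finite simple graph G (at some time t, with a ≠ b and c ≠ d), then e_a − e_b and e_c − e_d are strongly cospectral: for every eigenvalue θ of the Laplacian L of G, the orthogonal projection E_θ onto the θ-eigenspace of L satisfies E_θ(e_a − e_b) = E_θ(e_c − e_d) or E_θ(e_a − e_b) = −E_θ(e_c − e_d). -/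
open Matrix

variable {V : Type*}

/-- `E` is the orthogonal projection onto the `θ`-eigenspace of `L`:
it is a self-adjoint idempotent whose range is contained in the `θ`-eigenspace
and which fixes every `θ`-eigenvector. -/
def IsEigenProj [Fintype V] [DecidableEq V] (L : Matrix V V ℂ) (θ : ℝ) (E : Matrix V V ℂ) :
    Prop :=
  E * E = E ∧ Eᴴ = E ∧ L * E = (θ : ℂ) • E ∧
    ∀ v : V → ℂ, L.mulVec v = (θ : ℂ) • v → E.mulVec v = v

section Aux

variable [Fintype V] [DecidableEq V]

/-- Applying `exp` of a matrix to an eigenvector. -/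
lemma exp_mulVec_eigen (A : Matrix V V ℂ) (v : V → ℂ) (c : ℂ)
    (h : A.mulVec v = c • v) :
    (NormedSpace.exp A).mulVec v = Complex.exp c • v := by
  letI : SeminormedRing (Matrix V V ℂ) := Matrix.linftyOpSemiNormedRing
  letI : NormedRing (Matrix V V ℂ) := Matrix.linftyOpNormedRing
  letI : NormedAlgebra ℂ (Matrix V V ℂ) := Matrix.linftyOpNormedAlgebra
  have hpow : ∀ n : ℕ, (A ^ n).mulVec v = c ^ n • v := by
    intro n
    induction n with
    | zero => simp
    | succ n ih =>
      rw [pow_succ', pow_succ', ← Matrix.mulVec_mulVec, ih, Matrix.mulVec_smul, h,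
        smul_smul, mul_comm]
  -- the linear map `M ↦ M *ᵥ v`
  let f : Matrix V V ℂ →ₗ[ℂ] (V → ℂ) :=
    { toFun := fun M => M.mulVec v
      map_add' := fun M N => Matrix.add_mulVec M N v
      map_smul' := fun r M => Matrix.smul_mulVec r M v }
  have hf : Continuous f := f.continuous_of_finiteDimensional
  have hsum : Summable (fun n : ℕ => ((Nat.factorial n) : ℂ)⁻¹ • A ^ n) :=
    NormedSpace.expSeries_summable' (𝕂 := ℂ) A
  have hmap : f (NormedSpace.exp A) = ∑' n : ℕ, f (((Nat.factorial n) : ℂ)⁻¹ • A ^ n) := by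
    rw [NormedSpace.exp_eq_tsum (𝕂 := ℂ)]
    exact (hsum.hasSum.map f hf).tsum_eq.symm
  have hterm : ∀ n : ℕ, f (((Nat.factorial n) : ℂ)⁻¹ • A ^ n) = (((Nat.factorial n) : ℂ)⁻¹ * c ^ n) • v := by
    intro n
    show (((Nat.factorial n) : ℂ)⁻¹ • A ^ n).mulVec v = _
    rw [Matrix.smul_mulVec, hpow, smul_smul]
  have hcsum : Summable (fun n : ℕ => ((Nat.factorial n) : ℂ)⁻¹ * c ^ n) := by
    have := NormedSpace.expSeries_summable' (𝕂 := ℂ) c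
    simpa [smul_eq_mul] using this
  calc (NormedSpace.exp A).mulVec v = f (NormedSpace.exp A) := rfl
    _ = ∑' n : ℕ, f (((Nat.factorial n) : ℂ)⁻¹ • A ^ n) := hmap
    _ = ∑' n : ℕ, (((Nat.factorial n) : ℂ)⁻¹ * c ^ n) • v := by simp_rw [hterm]
    _ = (∑' n : ℕ, ((Nat.factorial n) : ℂ)⁻¹ * c ^ n) • v := hcsum.tsum_smul_const v
    _ = Complex.exp c • v := by
        congr 1
        rw [Complex.exp_eq_exp_ℂ, NormedSpace.exp_eq_tsum (𝕂 := ℂ)]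
        simp [smul_eq_mul]

/-- Entrywise conjugation interacts with `mulVec`. -/
lemma map_conj_mulVec (M : Matrix V V ℂ) (v : V → ℂ) :
    (M.map (starRingEnd ℂ)).mulVec v =
      fun i => (starRingEnd ℂ) (M.mulVec (fun j => (starRingEnd ℂ) (v j)) i) := by
  funext i
  simp [Matrix.mulVec, dotProduct, map_sum, Matrix.map_apply, mul_comm]

/-- The Laplacian has real entries. -/
lemma lapMatrix_map_conj (G : SimpleGraph V) [DecidableRel G.Adj] :
    (G.lapMatrix ℂ).map (starRingEnd ℂ) = G.lapMatrix ℂ := by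
  ext i j
  simp [SimpleGraph.lapMatrix, SimpleGraph.degMatrix, Matrix.map_apply, Matrix.sub_apply,
    Matrix.diagonal_apply, apply_ite (starRingEnd ℂ)]

/-- The Laplacian is Hermitian. -/
lemma lapMatrix_conjTranspose (G : SimpleGraph V) [DecidableRel G.Adj] :
    (G.lapMatrix ℂ)ᴴ = G.lapMatrix ℂ := by
  have hs : (G.lapMatrix ℂ)ᵀ = G.lapMatrix ℂ := G.isSymm_lapMatrix (R := ℂ)
  have hc := lapMatrix_map_conj G
  calc (G.lapMatrix ℂ)ᴴ = ((G.lapMatrix ℂ)ᵀ).map (starRingEnd ℂ) := by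
        ext i j; simp [Matrix.conjTranspose_apply, Matrix.map_apply]
    _ = (G.lapMatrix ℂ).map (starRingEnd ℂ) := by rw [hs]
    _ = _ := hc

/-- Uniqueness of the eigenprojection. -/
lemma eigenProj_unique (L : Matrix V V ℂ) (θ : ℝ) (E F : Matrix V V ℂ)
    (hE : IsEigenProj L θ E) (hF : IsEigenProj L θ F) : E = F := by
  have key : ∀ (P Q : Matrix V V ℂ), IsEigenProj L θ P → IsEigenProj L θ Q → P * Q = Q := by
    intro P Q hP hQ
    have h1 : ∀ w : V → ℂ, P.mulVec (Q.mulVec w) = Q.mulVec w := by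
      intro w
      refine hP.2.2.2 _ ?_
      rw [Matrix.mulVec_mulVec, hQ.2.2.1, Matrix.smul_mulVec]
    ext i j
    have := congrFun (h1 (Pi.single j 1)) i
    rw [Matrix.mulVec_mulVec] at this
    simpa using this
  have hEF : E * F = F := key E F hE hF
  have hFE : F * E = E := key F E hF hE
  calc E = (F * E)ᴴ := by rw [hFE, hE.2.1]
    _ = Eᴴ * Fᴴ := Matrix.conjTranspose_mul F E
    _ = E * F := by rw [hE.2.1, hF.2.1]
    _ = F := hEF

end Aux

/-- Perfect pair state transfer implies strong cospectrality. -/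
theorem pst_strongly_cospectral [Fintype V] [DecidableEq V] (G : SimpleGraph V)
    [DecidableRel G.Adj] (a b c d : V) (hab : a ≠ b) (hcd : c ≠ d) (t : ℝ)
    (h : PerfectPairStateTransfer G t a b c d) :
    ∀ (θ : ℝ) (E : Matrix V V ℂ), IsEigenProj (G.lapMatrix ℂ) θ E →
      E.mulVec (pairState a b) = E.mulVec (pairState c d) ∨
        E.mulVec (pairState a b) = -E.mulVec (pairState c d) := by
  intro θ E hE
  obtain ⟨γ, hγ, hU⟩ := h
  set L := G.lapMatrix ℂ with hLdef
  have hLc : L.map (starRingEnd ℂ) = L := lapMatrix_map_conj G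
  have hLh : Lᴴ = L := lapMatrix_conjTranspose G
  obtain ⟨hidem, hadj, hLE, hfix⟩ := hE
  -- E is real
  have hEconj : E.map (starRingEnd ℂ) = E := by
    refine (eigenProj_unique L θ (E.map (starRingEnd ℂ)) E ?_ ⟨hidem, hadj, hLE, hfix⟩)
    refine ⟨?_, ?_, ?_, ?_⟩
    · rw [← Matrix.map_mul, hidem]
    · have : (E.map (starRingEnd ℂ))ᴴ = Eᴴ.map (starRingEnd ℂ) := by
        ext i j; simp [Matrix.conjTranspose_apply, Matrix.map_apply]
      rw [this, hadj]
    · have : L * E.map (starRingEnd ℂ) = (L * E).map (starRingEnd ℂ) := by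
        conv_lhs => rw [← hLc]
        rw [Matrix.map_mul]
      rw [this, hLE]
      ext i j
      simp [Matrix.map_apply, Matrix.smul_apply, smul_eq_mul]
    · intro v hv
      have hstep : L.mulVec (fun j => (starRingEnd ℂ) (v j)) =
          fun i => (starRingEnd ℂ) ((L.mulVec v) i) := by
        conv_lhs => rw [← hLc]
        rw [map_conj_mulVec]
        simp only [Complex.conj_conj]
      have hconjv : L.mulVec (fun j => (starRingEnd ℂ) (v j)) =
          (θ : ℂ) • (fun j => (starRingEnd ℂ) (v j)) := by
        rw [hstep, hv]
        funext i
        simp [smul_eq_mul, Complex.conj_ofReal]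
      have hfixc := hfix _ hconjv
      rw [map_conj_mulVec, hfixc]
      funext i; simp
  -- pairState vectors are real, hence E applied to them is real
  have pairState_conj : ∀ (u w : V) (i : V),
      (starRingEnd ℂ) (pairState u w i) = pairState u w i := by
    intro u w i
    simp [pairState, Pi.single_apply, apply_ite (starRingEnd ℂ)]
  have hreal : ∀ (u w : V) (i : V),
      (starRingEnd ℂ) ((E.mulVec (pairState u w)) i) = (E.mulVec (pairState u w)) i := by
    intro u w i
    conv_rhs => rw [← hEconj, map_conj_mulVec]
    simp only [pairState_conj]
  set x := E.mulVec (pairState a b) with hxdef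
  set y := E.mulVec (pairState c d) with hydef
  -- x is an eigenvector
  have hx_eig : L.mulVec x = (θ : ℂ) • x := by
    rw [hxdef, Matrix.mulVec_mulVec, hLE, Matrix.smul_mulVec]
  -- commutation of E with the transition matrix
  have hEL : E * L = L * E := by
    have h1 : (E * L)ᴴ = L * E := by rw [Matrix.conjTranspose_mul, hLh, hadj]
    have h2 : (E * L)ᴴ = (θ : ℂ) • E := by rw [h1, hLE]
    have h3 : E * L = ((θ : ℂ) • E)ᴴ := by
      rw [← h2, Matrix.conjTranspose_conjTranspose]
    rw [h3, Matrix.conjTranspose_smul, hadj, Complex.star_def, Complex.conj_ofReal, hLE]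
  have hcomm : Commute E ((Complex.I * (t : ℂ)) • L) := by
    have hcommL : Commute E L := hEL
    exact hcommL.smul_right _
  have hcommU : Commute E (transitionMatrix G t) := by
    letI : SeminormedRing (Matrix V V ℂ) := Matrix.linftyOpSemiNormedRing
    letI : NormedRing (Matrix V V ℂ) := Matrix.linftyOpNormedRing
    letI : NormedAlgebra ℂ (Matrix V V ℂ) := Matrix.linftyOpNormedAlgebra
    exact hcomm.exp_right
  -- key equation
  have hAx : ((Complex.I * (t : ℂ)) • L).mulVec x = (Complex.I * (t : ℂ) * (θ : ℂ)) • x := by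
    rw [Matrix.smul_mulVec, hx_eig, smul_smul]
  have hUx : (transitionMatrix G t).mulVec x =
      Complex.exp (Complex.I * (t : ℂ) * (θ : ℂ)) • x :=
    exp_mulVec_eigen _ _ _ hAx
  have hkey : Complex.exp (Complex.I * (t : ℂ) * (θ : ℂ)) • x = γ • y := by
    calc Complex.exp (Complex.I * (t : ℂ) * (θ : ℂ)) • x
        = (transitionMatrix G t).mulVec x := hUx.symm
      _ = ((transitionMatrix G t) * E).mulVec (pairState a b) := by
          rw [← Matrix.mulVec_mulVec]
      _ = (E * (transitionMatrix G t)).mulVec (pairState a b) := by rw [← hcommU]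
      _ = E.mulVec ((transitionMatrix G t).mulVec (pairState a b)) := by
          rw [Matrix.mulVec_mulVec]
      _ = E.mulVec (γ • pairState c d) := by rw [hU]
      _ = γ • y := by rw [Matrix.mulVec_smul]
  set e := Complex.exp (Complex.I * (t : ℂ) * (θ : ℂ)) with hedef
  have he : e ≠ 0 := Complex.exp_ne_zero _
  set μ := γ * e⁻¹ with hμdef
  have hxy : x = μ • y := by
    have := congrArg (fun v => e⁻¹ • v) hkey
    simpa [smul_smul, inv_mul_cancel₀ he, mul_comm] using this
  have habse : ‖e‖ = 1 := by
    rw [hedef, Complex.norm_exp]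
    norm_num [Complex.mul_re, Complex.mul_im]
  have habsμ : ‖μ‖ = 1 := by
    rw [hμdef, norm_mul, norm_inv, habse, hγ]; norm_num
  by_cases hy : y = 0
  · left
    rw [hxy, hy, smul_zero]
  · -- μ is real
    obtain ⟨i, hi⟩ : ∃ i, y i ≠ 0 := by
      by_contra hc
      push_neg at hc
      exact hy (funext hc)
    have h1 : x i = μ * y i := by rw [hxy]; simp [smul_eq_mul]
    have h2 : (starRingEnd ℂ) (x i) = (starRingEnd ℂ) μ * y i := by
      rw [h1, _root_.map_mul, hydef, hreal]
    rw [hreal a b i] at h2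
    have hμconj : (starRingEnd ℂ) μ = μ := by
      have := h1.symm.trans h2
      exact mul_right_cancel₀ hi this.symm
    obtain ⟨r, hr⟩ := Complex.conj_eq_iff_real.mp hμconj
    have hrabs : |r| = 1 := by
      rw [hr, Complex.norm_real, Real.norm_eq_abs] at habsμ
      exact habsμ
    rcases abs_eq (by norm_num : (0:ℝ) ≤ 1) |>.mp hrabs with hr1 | hr1
    · left
      rw [hxy, hr, hr1]
      simp
    · right
      rw [hxy, hr, hr1]
      push_cast
      simp
end

section
/- Let G be a finite simple graph with Laplacian L and transition matrix U(t) = exp(itL), and let a ≠ b be vertices of G. The pair state e_a − e_b is fixed (i.e., for every t ∈ ℝ there exists γ ∈ ℂ with |γ| = 1 such that U(t)(e_a − e_b) = γ(e_a − e_b)) if and only if a and b are twins in G, that is, N(a)∖{b} = N(b)∖{a}, where N(v) denotes the set of neighbours of v. -/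
open Matrix

variable {V : Type*}

set_option linter.unusedSectionVars false

attribute [local instance] Matrix.linftyOpNormedAddCommGroup Matrix.linftyOpNormedRing
  Matrix.linftyOpNormedAlgebra

section Aux

variable [Fintype V] [DecidableEq V]

lemma pairState_apply (a b x : V) :
    pairState a b x = (if x = a then 1 else 0) - (if x = b then 1 else 0) := by
  simp [pairState, Pi.single_apply]

/-- The linear map `M ↦ M *ᵥ v`, as a continuous linear map. -/
noncomputable def mulVecCLM (v : V → ℂ) : Matrix V V ℂ →L[ℂ] (V → ℂ) :=
  LinearMap.toContinuousLinearMap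
    { toFun := fun A => A *ᵥ v
      map_add' := fun A B => add_mulVec A B v
      map_smul' := fun c A => smul_mulVec c A v }

@[simp] lemma mulVecCLM_apply (v : V → ℂ) (A : Matrix V V ℂ) : mulVecCLM v A = A *ᵥ v := rfl

lemma exp_mulVec_of_eigen {M : Matrix V V ℂ} {v : V → ℂ} {c : ℂ} (h : M *ᵥ v = c • v) :
    (NormedSpace.exp M) *ᵥ v = Complex.exp c • v := by
  have hpow : ∀ n : ℕ, (M ^ n) *ᵥ v = c ^ n • v := by
    intro n
    induction n with
    | zero => simp
    | succ n ih =>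
      rw [pow_succ, ← mulVec_mulVec, h, mulVec_smul, ih, smul_smul, mul_comm, ← pow_succ]
  have hsum : Summable (fun n : ℕ => (n.factorial : ℂ)⁻¹ • M ^ n) :=
    NormedSpace.expSeries_summable' M
  have hsumc : Summable (fun n : ℕ => (n.factorial : ℂ)⁻¹ * c ^ n) := by
    simpa [smul_eq_mul] using NormedSpace.expSeries_summable' (𝕂 := ℂ) c
  calc (NormedSpace.exp M) *ᵥ v = mulVecCLM v (∑' n : ℕ, (n.factorial : ℂ)⁻¹ • M ^ n) := by
        rw [NormedSpace.exp_eq_tsum ℂ]; rfl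
    _ = ∑' n : ℕ, mulVecCLM v ((n.factorial : ℂ)⁻¹ • M ^ n) := (mulVecCLM v).map_tsum hsum
    _ = ∑' n : ℕ, ((n.factorial : ℂ)⁻¹ * c ^ n) • v := by
        congr 1; funext n
        simp [hpow n, smul_mulVec, smul_smul]
    _ = (∑' n : ℕ, (n.factorial : ℂ)⁻¹ * c ^ n) • v := hsumc.tsum_smul_const v
    _ = Complex.exp c • v := by
        rw [Complex.exp_eq_exp_ℂ, NormedSpace.exp_eq_tsum ℂ]
        simp [smul_eq_mul]

/-- If the pair state is fixed at all times, it is an eigenvector of the Laplacian. -/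
lemma eigen_of_fixed (G : SimpleGraph V) [DecidableRel G.Adj] {v : V → ℂ} (a : V)
    (hva : v a = 1)
    (h : ∀ t : ℝ, ∃ γ : ℂ, (transitionMatrix G t) *ᵥ v = γ • v) :
    (G.lapMatrix ℂ) *ᵥ v = (((G.lapMatrix ℂ) *ᵥ v) a) • v := by
  set L : Matrix V V ℂ := G.lapMatrix ℂ with hL
  have hrw : ∀ t : ℝ, (Complex.I * (t : ℂ)) • L = t • (Complex.I • L) := by
    intro t
    rw [← smul_assoc]
    congr 1
    rw [Complex.real_smul, mul_comm]
  have hd : HasDerivAt (fun t : ℝ => transitionMatrix G t) (Complex.I • L) 0 := by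
    have h1 : HasDerivAt (fun t : ℝ => NormedSpace.exp (t • (Complex.I • L)))
        (NormedSpace.exp ((0 : ℝ) • (Complex.I • L)) * (Complex.I • L)) 0 :=
      hasDerivAt_exp_smul_const (Complex.I • L) (0 : ℝ)
    have h2 : (NormedSpace.exp : Matrix V V ℂ → Matrix V V ℂ) = NormedSpace.exp :=
      rfl
    simp only [zero_smul, NormedSpace.exp_zero, one_mul, h2] at h1
    refine h1.congr_of_eventuallyEq ?_
    filter_upwards with t
    rw [transitionMatrix, hrw]
  have hFd : HasDerivAt (fun t : ℝ => transitionMatrix G t *ᵥ v)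
      (Complex.I • (L *ᵥ v)) 0 := by
    have := (((mulVecCLM v).restrictScalars ℝ).hasFDerivAt).comp_hasDerivAt 0 hd
    rw [← smul_mulVec]
    exact this
  have hγval : ∀ t : ℝ, transitionMatrix G t *ᵥ v
      = ((transitionMatrix G t *ᵥ v) a) • v := by
    intro t
    obtain ⟨γ, hγ⟩ := h t
    have hg : (transitionMatrix G t *ᵥ v) a = γ := by simp [hγ, hva]
    rw [hg, hγ]
  have heval : HasDerivAt (fun t : ℝ => (transitionMatrix G t *ᵥ v) a)
      ((Complex.I • (L *ᵥ v)) a) 0 := by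
    have := ((ContinuousLinearMap.proj (R := ℝ) (φ := fun _ : V => ℂ)
      a).hasFDerivAt).comp_hasDerivAt 0 hFd
    exact this
  have hGd : HasDerivAt (fun t : ℝ => transitionMatrix G t *ᵥ v)
      (((Complex.I • (L *ᵥ v)) a) • v) 0 := by
    refine (heval.smul_const v).congr_of_eventuallyEq ?_
    exact Filter.Eventually.of_forall hγval
  have huniq := hFd.unique hGd
  have h3 : Complex.I • (L *ᵥ v) = Complex.I • ((L *ᵥ v) a • v) := by
    rw [huniq]
    simp [smul_smul]
  exact smul_right_injective (V → ℂ) Complex.I_ne_zero h3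

end Aux

section Comb

variable [Fintype V] [DecidableEq V] (G : SimpleGraph V) [DecidableRel G.Adj]

lemma lap_mulVec_pair (a b x : V) :
    ((G.lapMatrix ℂ) *ᵥ pairState a b) x
      = (G.degree x : ℂ) * pairState a b x
        - ((if G.Adj x a then 1 else 0) - (if G.Adj x b then 1 else 0)) := by
  rw [SimpleGraph.lapMatrix_mulVec_apply]
  congr 1
  simp only [pairState_apply, Finset.sum_sub_distrib]
  congr 1 <;> simp [Finset.sum_ite_eq', SimpleGraph.mem_neighborFinset]

lemma twins_adj (a b : V) (h : G.neighborSet a \ {b} = G.neighborSet b \ {a})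
    {x : V} (hxa : x ≠ a) (hxb : x ≠ b) : G.Adj x a ↔ G.Adj x b := by
  have hx := Set.ext_iff.mp h x
  simp only [Set.mem_diff, SimpleGraph.mem_neighborSet, Set.mem_singleton_iff, hxa, hxb,
    not_false_iff, and_true] at hx
  rw [G.adj_comm x a, G.adj_comm x b]
  exact hx

lemma twins_degree (a b : V) (h : G.neighborSet a \ {b} = G.neighborSet b \ {a}) :
    G.degree a = G.degree b := by
  have hfin : G.neighborFinset a \ {b} = G.neighborFinset b \ {a} := by
    ext x
    have hx := Set.ext_iff.mp h x
    simpa [SimpleGraph.mem_neighborFinset, SimpleGraph.mem_neighborSet] using hx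
  rw [Finset.sdiff_singleton_eq_erase, Finset.sdiff_singleton_eq_erase] at hfin
  by_cases hadj : G.Adj a b
  · have hb : b ∈ G.neighborFinset a := by simpa using hadj
    have ha : a ∈ G.neighborFinset b := by simpa using hadj.symm
    have h1 := congrArg Finset.card hfin
    rw [Finset.card_erase_of_mem hb, Finset.card_erase_of_mem ha,
      G.card_neighborFinset_eq_degree, G.card_neighborFinset_eq_degree] at h1
    have c1 : 0 < G.degree a := by
      rw [← G.card_neighborFinset_eq_degree]; exact Finset.card_pos.mpr ⟨b, hb⟩
    have c2 : 0 < G.degree b := by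
      rw [← G.card_neighborFinset_eq_degree]; exact Finset.card_pos.mpr ⟨a, ha⟩
    omega
  · have hb : b ∉ G.neighborFinset a := by simpa using hadj
    have ha : a ∉ G.neighborFinset b := by
      simp only [SimpleGraph.mem_neighborFinset]
      rw [G.adj_comm]; exact hadj
    rw [Finset.erase_eq_of_notMem hb, Finset.erase_eq_of_notMem ha] at hfin
    rw [← G.card_neighborFinset_eq_degree, ← G.card_neighborFinset_eq_degree, hfin]

lemma eigen_of_twins (a b : V) (hab : a ≠ b)
    (h : G.neighborSet a \ {b} = G.neighborSet b \ {a}) :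
    (G.lapMatrix ℂ) *ᵥ pairState a b
      = ((G.degree a : ℂ) + (if G.Adj a b then 1 else 0)) • pairState a b := by
  funext x
  rw [Pi.smul_apply, lap_mulVec_pair, smul_eq_mul]
  by_cases hxa : x = a
  · subst hxa
    simp [pairState_apply, hab, G.adj_comm]
  · by_cases hxb : x = b
    · subst hxb
      have hd := twins_degree G a x h
      have hadj : G.Adj x a ↔ G.Adj a x := G.adj_comm x a
      simp only [pairState_apply, if_neg hxa, if_pos rfl, SimpleGraph.irrefl, if_false, hd,
        hadj, zero_sub, sub_zero, if_true]
      ring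
    · have hadj := twins_adj G a b h hxa hxb
      simp [pairState_apply, hxa, hxb, hadj]

end Comb


/-- A pair state `e_a - e_b` is fixed if and only if `a` and `b` are twins. -/
theorem fixed_iff_twins [Fintype V] [DecidableEq V] (G : SimpleGraph V)
    [DecidableRel G.Adj] (a b : V) (hab : a ≠ b) :
    (∀ t : ℝ, ∃ γ : ℂ, ‖γ‖ = 1 ∧
        (transitionMatrix G t).mulVec (pairState a b) = γ • pairState a b) ↔
      G.neighborSet a \ {b} = G.neighborSet b \ {a} := by
  constructor
  · intro h
    have hva : pairState a b a = 1 := by simp [pairState_apply, hab]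
    have h' : ∀ t : ℝ, ∃ γ : ℂ, (transitionMatrix G t) *ᵥ pairState a b = γ • pairState a b :=
      fun t => (h t).imp fun γ hγ => hγ.2
    have hL := eigen_of_fixed G a hva h'
    ext x
    simp only [Set.mem_diff, SimpleGraph.mem_neighborSet, Set.mem_singleton_iff]
    by_cases hxa : x = a
    · subst hxa
      simp [hab]
    · by_cases hxb : x = b
      · subst hxb
        simp [hab, Ne.symm hab]
      · have hx := congrFun hL x
        rw [lap_mulVec_pair] at hx
        simp only [pairState_apply, if_neg hxa, if_neg hxb, sub_zero, Pi.smul_apply,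
          smul_eq_mul, mul_zero, sub_self, zero_sub, neg_eq_zero, sub_eq_zero] at hx
        rw [G.adj_comm a x, G.adj_comm b x]
        constructor
        · rintro ⟨h1, -⟩
          refine ⟨?_, hxa⟩
          by_contra h2
          simp [h1, h2] at hx
        · rintro ⟨h1, -⟩
          refine ⟨?_, hxb⟩
          by_contra h2
          simp [h1, h2] at hx
  · intro h t
    have hL := eigen_of_twins G a b hab h
    set lamc : ℂ := (G.degree a : ℂ) + (if G.Adj a b then 1 else 0) with hlamc
    have him : lamc.im = 0 := by
      rw [hlamc]
      split <;> simp
    refine ⟨Complex.exp (Complex.I * t * lamc), ?_, ?_⟩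
    · rw [Complex.norm_exp]
      have hre : (Complex.I * t * lamc).re = 0 := by
        simp [Complex.mul_re, Complex.mul_im, him]
      rw [hre, Real.exp_zero]
    · have hMv : ((Complex.I * (t : ℂ)) • G.lapMatrix ℂ) *ᵥ pairState a b
          = (Complex.I * t * lamc) • pairState a b := by
        rw [smul_mulVec, hL, smul_smul]
      exact exp_mulVec_of_eigen hMv
end

section
/- Let G be a connected finite simple graph that is edge-transitive (for any two edges of G there is an automorphism of G mapping one to the other as unordered pairs). Then for every edge {a,b} of G, the eigenvalue support of the edge state e_a − e_b consists exactly of all the nonzero eigenvalues of the Laplacian L of G. -/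
open Matrix

variable {V : Type*}

section Aux

variable [Fintype V] [DecidableEq V] (G : SimpleGraph V) [DecidableRel G.Adj]

lemma lapMatrix_complex_eq : G.lapMatrix ℂ = (G.lapMatrix ℝ).map (Complex.ofReal) := by
  ext i j
  by_cases h : i = j <;>
    simp [SimpleGraph.lapMatrix, SimpleGraph.degMatrix, Matrix.diagonal_apply, h,
      apply_ite Complex.ofReal]

/-- If the complex Laplacian kills `v` and `G` is preconnected, `v` is constant. -/
lemma const_of_lap_ker (hconn : G.Preconnected) {v : V → ℂ}
    (hv : (G.lapMatrix ℂ).mulVec v = 0) : ∀ i j : V, v i = v j := by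
  have hre : (G.lapMatrix ℝ).mulVec (fun i => (v i).re) = 0 := by
    funext i
    have := congrFun hv i
    rw [lapMatrix_complex_eq] at this
    have h2 := congrArg Complex.re this
    simpa [Matrix.mulVec, dotProduct, Complex.re_sum] using h2
  have him : (G.lapMatrix ℝ).mulVec (fun i => (v i).im) = 0 := by
    funext i
    have := congrFun hv i
    rw [lapMatrix_complex_eq] at this
    have h2 := congrArg Complex.im this
    simpa [Matrix.mulVec, dotProduct, Complex.im_sum] using h2
  have hre' : ∀ i j : V, G.Reachable i j → (v i).re = (v j).re := by
    rw [← SimpleGraph.lapMatrix_mulVec_eq_zero_iff_forall_reachable]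
    simpa [Matrix.toLin'_apply] using hre
  have him' : ∀ i j : V, G.Reachable i j → (v i).im = (v j).im := by
    rw [← SimpleGraph.lapMatrix_mulVec_eq_zero_iff_forall_reachable]
    simpa [Matrix.toLin'_apply] using him
  intro i j
  exact Complex.ext (hre' i j (hconn i j)) (him' i j (hconn i j))

lemma degree_iso (σ : G ≃g G) (i : V) : G.degree (σ i) = G.degree i := by
  rw [← SimpleGraph.card_neighborSet_eq_degree, ← SimpleGraph.card_neighborSet_eq_degree]
  exact (Fintype.card_congr (σ.mapNeighborSet i)).symm

lemma lapMatrix_iso (σ : G ≃g G) (i j : V) :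
    G.lapMatrix ℂ (σ i) (σ j) = G.lapMatrix ℂ i j := by
  simp only [SimpleGraph.lapMatrix, Matrix.sub_apply, SimpleGraph.degMatrix,
    SimpleGraph.adjMatrix_apply, Matrix.diagonal_apply]
  have hadj : G.Adj (σ i) (σ j) ↔ G.Adj i j := σ.map_adj_iff
  by_cases h : i = j
  · subst h; simp [degree_iso]
  · have h2 : σ i ≠ σ j := fun hc => h (σ.toEquiv.injective hc)
    simp [h, h2, hadj]

/-- Composing with an automorphism preserves eigenvectors. -/
lemma eigvec_comp (σ : G ≃g G) {θ : ℂ} {v : V → ℂ}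
    (hv : (G.lapMatrix ℂ).mulVec v = θ • v) :
    (G.lapMatrix ℂ).mulVec (fun i => v (σ i)) = θ • (fun i => v (σ i)) := by
  funext i
  have key : ∀ k : V, G.lapMatrix ℂ i (σ.symm k) = G.lapMatrix ℂ (σ i) k := by
    intro k
    have := lapMatrix_iso G σ i (σ.symm k)
    simpa using this.symm
  calc (G.lapMatrix ℂ).mulVec (fun i => v (σ i)) i
      = ∑ j, G.lapMatrix ℂ i j * v (σ j) := rfl
    _ = ∑ k, G.lapMatrix ℂ i (σ.symm k) * v (σ (σ.symm k)) :=
        (Fintype.sum_equiv σ.toEquiv.symm _ _ (fun k => rfl)).symm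
    _ = ∑ k, G.lapMatrix ℂ (σ i) k * v k := by
        refine Finset.sum_congr rfl fun k _ => ?_
        rw [key k]
        congr 1
        simp
    _ = (G.lapMatrix ℂ).mulVec v (σ i) := rfl
    _ = (θ • v) (σ i) := by rw [hv]
    _ = (θ • fun i => v (σ i)) i := rfl

end Aux

/-- In a connected edge-transitive graph, the eigenvalue support of an edge state
consists exactly of the nonzero Laplacian eigenvalues. -/
theorem edge_transitive_support [Fintype V] [DecidableEq V] (G : SimpleGraph V)
    [DecidableRel G.Adj] (hconn : G.Connected)
    (hET : ∀ e ∈ G.edgeSet, ∀ f ∈ G.edgeSet, ∃ σ : G ≃g G, Sym2.map σ e = f)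
    (a b : V) (hab : G.Adj a b) :
    ∀ θ : ℝ, (∃ v : V → ℂ, v ≠ 0 ∧ (G.lapMatrix ℂ).mulVec v = (θ : ℂ) • v) →
      ∀ E : Matrix V V ℂ, IsEigenProj (G.lapMatrix ℂ) θ E →
        (E.mulVec (pairState a b) ≠ 0 ↔ θ ≠ 0) := by
  intro θ hθeig E hE
  obtain ⟨hE1, hE2, hE3, hE4⟩ := hE
  -- key dot product identity
  have key : ∀ u : V → ℂ, (G.lapMatrix ℂ).mulVec u = (θ : ℂ) • u →
      star u ⬝ᵥ (E.mulVec (pairState a b)) = star (u a) - star (u b) := by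
    intro u hu
    have h1 : star u ⬝ᵥ (E.mulVec (pairState a b))
        = star (E.mulVec u) ⬝ᵥ pairState a b := by
      rw [Matrix.dotProduct_mulVec, Matrix.star_mulVec, hE2]
    rw [h1, hE4 u hu]
    simp [pairState, dotProduct_sub, dotProduct_single, Pi.star_apply]
  constructor
  · -- E p ≠ 0 → θ ≠ 0
    intro hne hθ0
    apply hne
    subst hθ0
    -- E p is in the kernel of L
    have hLw : (G.lapMatrix ℂ).mulVec (E.mulVec (pairState a b)) = 0 := by
      rw [Matrix.mulVec_mulVec, hE3]
      simp
    have hconst := const_of_lap_ker G hconn.preconnected hLw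
    -- constant vector 1 is fixed by E
    have hone : (G.lapMatrix ℂ).mulVec (fun _ => 1) = ((0:ℝ) : ℂ) • (fun _ => (1:ℂ)) := by
      simpa using G.lapMatrix_mulVec_const_eq_zero (R := ℂ)
    have hsum := key (fun _ => 1) hone
    have hstar : (star fun _ : V => (1:ℂ)) = (fun _ : V => (1:ℂ)) := by
      funext i; simp
    rw [hstar] at hsum
    simp only [star_one, sub_self] at hsum
    -- sum of the constant vector E p is zero
    have hsum' : (Fintype.card V : ℂ) * (E.mulVec (pairState a b) a) = 0 := by
      have : (fun _ => (1:ℂ)) ⬝ᵥ (E.mulVec (pairState a b))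
          = ∑ i : V, E.mulVec (pairState a b) i := by
        simp [dotProduct]
      rw [this] at hsum
      calc (Fintype.card V : ℂ) * (E.mulVec (pairState a b) a)
          = ∑ _i : V, E.mulVec (pairState a b) a := by
            rw [Finset.sum_const, Finset.card_univ, nsmul_eq_mul]
        _ = ∑ i : V, E.mulVec (pairState a b) i :=
            Finset.sum_congr rfl fun i _ => (hconst a i)
        _ = 0 := hsum
    have hcard : (Fintype.card V : ℂ) ≠ 0 :=
      Nat.cast_ne_zero.mpr (Fintype.card_pos_iff.mpr hconn.nonempty).ne'
    have ha0 : E.mulVec (pairState a b) a = 0 := by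
      rcases mul_eq_zero.mp hsum' with h | h
      · exact absurd h hcard
      · exact h
    funext i
    show (E.mulVec (pairState a b)) i = 0
    rw [hconst i a]
    exact ha0
  · -- θ ≠ 0 → E p ≠ 0
    intro hθ h0
    apply hθ
    obtain ⟨v, hv0, hv⟩ := hθeig
    -- every θ-eigenvector agrees on a and b
    have hab' : ∀ u : V → ℂ, (G.lapMatrix ℂ).mulVec u = (θ : ℂ) • u → u a = u b := by
      intro u hu
      have hk := key u hu
      rw [h0, dotProduct_zero] at hk
      exact star_injective (sub_eq_zero.mp hk.symm)
    -- v agrees on all edges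
    have hedge : ∀ c d : V, G.Adj c d → v c = v d := by
      intro c d hcd
      obtain ⟨σ, hσ⟩ := hET s(a, b) hab s(c, d) hcd
      rw [Sym2.map_pair_eq, Sym2.eq_iff] at hσ
      have hu := eigvec_comp G σ hv
      have hvv : v (σ a) = v (σ b) := hab' (fun i => v (σ i)) hu
      rcases hσ with ⟨h1, h2⟩ | ⟨h1, h2⟩
      · rw [h1, h2] at hvv; exact hvv
      · rw [h1, h2] at hvv; exact hvv.symm
    -- hence v is constant
    have hconst : ∀ i j : V, v i = v j := by
      intro i j
      obtain ⟨w⟩ := hconn.preconnected i j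
      induction w with
      | nil => rfl
      | cons h p ih => exact (hedge _ _ h).trans ih
    -- so L v = 0
    have hv1 : v = fun _ => v a := funext fun i => hconst i a
    have hLv : (G.lapMatrix ℂ).mulVec v = 0 := by
      rw [hv1]
      have : (fun _ : V => v a) = (v a) • (fun _ : V => (1:ℂ)) := by
        funext i; simp
      rw [this, Matrix.mulVec_smul, G.lapMatrix_mulVec_const_eq_zero, smul_zero]
    rw [hLv] at hv
    rcases smul_eq_zero.mp hv.symm with h | h
    · exact_mod_cast h
    · exact absurd h hv0
end

section
/- Transitivity of perfect pair state transfer: let G be a finite simple graph with transition matrix U(t) = exp(itL), let a, b, c be pairwise distinct vertices and α, β, γ be pairwise distinct vertices of G. If there is perfect pair state transfer between e_a − e_b and e_α − e_β at time τ, and there is perfect pair state transfer between e_b − e_c and e_β − e_γ at the same time τ, then there is perfect pair state transfer between e_a − e_c and e_α − e_γ at time τ. -/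
open Matrix

variable {V : Type*}

lemma lapMatrix_isHermitian [Fintype V] [DecidableEq V] (G : SimpleGraph V)
    [DecidableRel G.Adj] : (G.lapMatrix ℂ).IsHermitian := by
  have hsymm := G.isSymm_lapMatrix (R := ℂ)
  have hstar : ∀ i j, star (G.lapMatrix ℂ i j) = G.lapMatrix ℂ i j := by
    intro i j
    simp only [SimpleGraph.lapMatrix, SimpleGraph.degMatrix, Matrix.sub_apply,
      Matrix.diagonal_apply, SimpleGraph.adjMatrix_apply, star_sub, apply_ite (star : ℂ → ℂ),
      star_natCast, star_one, star_zero]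
  ext i j
  rw [conjTranspose_apply, hstar, hsymm.apply i j]

lemma transitionMatrix_unitary [Fintype V] [DecidableEq V] (G : SimpleGraph V)
    [DecidableRel G.Adj] (t : ℝ) :
    (transitionMatrix G t)ᴴ * transitionMatrix G t = 1 := by
  set M : Matrix V V ℂ := (Complex.I * (t : ℂ)) • G.lapMatrix ℂ with hM
  have hMH : Mᴴ = -M := by
    rw [hM, conjTranspose_smul, (lapMatrix_isHermitian G).eq, ← neg_smul]
    congr 1
    simp [Complex.ext_iff]
  have : (transitionMatrix G t)ᴴ = NormedSpace.exp (-M) := by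
    rw [transitionMatrix, ← Matrix.exp_conjTranspose, hMH]
  rw [this, transitionMatrix, ← hM]
  calc NormedSpace.exp (-M) * NormedSpace.exp M
      = NormedSpace.exp (-M + M) :=
        (Matrix.exp_add_of_commute (-M) M (Commute.neg_left rfl)).symm
    _ = 1 := by rw [neg_add_cancel, NormedSpace.exp_zero]

lemma dot_preserved [Fintype V] [DecidableEq V] (G : SimpleGraph V)
    [DecidableRel G.Adj] (t : ℝ) (x y : V → ℂ) :
    star ((transitionMatrix G t).mulVec x) ⬝ᵥ (transitionMatrix G t).mulVec y
      = star x ⬝ᵥ y := by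
  rw [star_mulVec, dotProduct_mulVec, vecMul_vecMul, transitionMatrix_unitary, vecMul_one]

lemma pair_dot [Fintype V] [DecidableEq V] {a b c : V} (hab : a ≠ b) (hbc : b ≠ c)
    (hac : a ≠ c) : star (pairState a b) ⬝ᵥ pairState b c = -1 := by
  have hstar : ∀ v : V, star (Pi.single v 1 : V → ℂ) = Pi.single v 1 := by
    intro v
    ext w
    simp only [Pi.star_apply, Pi.single_apply, apply_ite (star : ℂ → ℂ), star_one, star_zero]
  simp only [pairState, star_sub, hstar, sub_dotProduct, dotProduct_sub,
    single_dotProduct, one_mul, Pi.single_apply]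
  simp [hab, hbc, hac]

lemma pair_add [Fintype V] [DecidableEq V] (a b c : V) :
    pairState a b + pairState b c = pairState a c := by
  simp only [pairState]
  abel

/-- Transitivity of perfect pair state transfer. -/
theorem pst_trans [Fintype V] [DecidableEq V] (G : SimpleGraph V) [DecidableRel G.Adj]
    (a b c α β γ : V) (hab : a ≠ b) (hac : a ≠ c) (hbc : b ≠ c)
    (hαβ : α ≠ β) (hαγ : α ≠ γ) (hβγ : β ≠ γ) (τ : ℝ)
    (h₁ : PerfectPairStateTransfer G τ a b α β)
    (h₂ : PerfectPairStateTransfer G τ b c β γ) :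
    PerfectPairStateTransfer G τ a c α γ := by
  obtain ⟨γ₁, hγ₁, hU₁⟩ := h₁
  obtain ⟨γ₂, hγ₂, hU₂⟩ := h₂
  have key : star ((transitionMatrix G τ).mulVec (pairState a b)) ⬝ᵥ
      (transitionMatrix G τ).mulVec (pairState b c) = -1 := by
    rw [dot_preserved, pair_dot hab hbc hac]
  rw [hU₁, hU₂, star_smul, smul_dotProduct, dotProduct_smul,
    pair_dot hαβ hβγ hαγ] at key
  have hconj : star γ₁ * γ₁ = 1 := by
    rw [mul_comm, Complex.star_def, Complex.mul_conj, Complex.normSq_eq_norm_sq, hγ₁]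
    norm_num
  have hγeq : γ₂ = γ₁ := by
    have h1 : star γ₁ * γ₂ = 1 := by
      simp only [smul_eq_mul] at key
      linear_combination -key
    calc γ₂ = γ₁ * (star γ₁ * γ₂) := by
            rw [← mul_assoc, mul_comm γ₁, hconj, one_mul]
      _ = γ₁ := by rw [h1, mul_one]
  refine ⟨γ₁, hγ₁, ?_⟩
  rw [← pair_add a b c, mulVec_add, hU₁, hU₂, hγeq, ← smul_add, pair_add]
end

section
/- Let G be a finite simple bipartite graph with bipartition (B₁, B₂) (every edge of G has one end in B₁ and one end in B₂), and let a, c ∈ B₁ and b, d ∈ B₂. For every time t, there is perfect pair state transfer between e_a − e_b and e_c − e_d at time t (i.e., exp(itL)(e_a − e_b) = γ(e_c − e_d) for some γ ∈ ℂ with |γ| = 1, where L = Δ − A is the Laplacian) if and only if there is perfect plus state transfer between e_a + e_b and e_c + e_d at time t (i.e., exp(itL₊)(e_a + e_b) = γ′(e_c + e_d) for some γ′ ∈ ℂ with |γ′| = 1, where L₊ = Δ + A is the unsigned Laplacian). -/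
open Matrix

variable {V : Type*}

/-- The transition matrix `exp(itL₊)` of the walk generated by the unsigned (signless)
Laplacian `L₊ = Δ + A` of `G`. -/
noncomputable def transitionMatrixPlus [Fintype V] [DecidableEq V] (G : SimpleGraph V)
    [DecidableRel G.Adj] (t : ℝ) : Matrix V V ℂ :=
  NormedSpace.exp ((Complex.I * (t : ℂ)) • (G.degMatrix ℂ + G.adjMatrix ℂ))

/-- The plus state `e_a + e_b`. -/
def plusState [DecidableEq V] (a b : V) : V → ℂ := Pi.single a 1 + Pi.single b 1

/-- In a bipartite graph (with `a, c` in one part and `b, d` in the other), perfect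
Laplacian pair state transfer is equivalent to perfect unsigned-Laplacian plus state
transfer. -/
theorem bipartite_pair_iff_plus [Fintype V] [DecidableEq V] (G : SimpleGraph V)
    [DecidableRel G.Adj] (B₁ B₂ : Set V)
    (hunion : B₁ ∪ B₂ = Set.univ) (hdisj : B₁ ∩ B₂ = ∅)
    (hbip : ∀ u v : V, G.Adj u v → (u ∈ B₁ ∧ v ∈ B₂) ∨ (u ∈ B₂ ∧ v ∈ B₁))
    (a c : V) (ha : a ∈ B₁) (hc : c ∈ B₁) (b d : V) (hb : b ∈ B₂) (hd : d ∈ B₂) (t : ℝ) :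
    PerfectPairStateTransfer G t a b c d ↔
      ∃ γ' : ℂ, ‖γ'‖ = 1 ∧
        (transitionMatrixPlus G t).mulVec (plusState a b) = γ' • plusState c d := by
  classical
  -- the signature function and matrix
  set s : V → ℂ := fun v => if v ∈ B₁ then 1 else -1 with hs
  set S : Matrix V V ℂ := Matrix.diagonal s with hSdef
  have hnot12 : ∀ v : V, v ∈ B₁ → v ∈ B₂ → False := by
    intro v h1 h2
    have : v ∈ B₁ ∩ B₂ := ⟨h1, h2⟩
    rw [hdisj] at this
    exact this
  have hs2 : ∀ v, s v * s v = 1 := by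
    intro v; simp only [hs]; split <;> norm_num
  have hsadj : ∀ u v, G.Adj u v → s u * s v = -1 := by
    intro u v huv
    rcases hbip u v huv with ⟨h1, h2⟩ | ⟨h1, h2⟩
    · have hv : v ∉ B₁ := fun h => hnot12 v h h2
      simp only [hs, if_pos h1, if_neg hv]; ring
    · have hu : u ∉ B₁ := fun h => hnot12 u h h1
      simp only [hs, if_neg hu, if_pos h2]; ring
  have hSS : S * S = 1 := by
    rw [hSdef, Matrix.diagonal_mul_diagonal]
    have : (fun v => s v * s v) = fun _ => (1 : ℂ) := funext hs2
    rw [this, Matrix.diagonal_one]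
  -- conjugation identity for the Laplacians
  have hconj : S * G.lapMatrix ℂ * S = G.degMatrix ℂ + G.adjMatrix ℂ := by
    ext i j
    rw [hSdef, Matrix.mul_diagonal, Matrix.diagonal_mul]
    by_cases hij : i = j
    · subst hij
      simp [SimpleGraph.lapMatrix, SimpleGraph.degMatrix, Matrix.diagonal_apply_eq,
        mul_comm, ← mul_assoc, hs2 i]
    · have hdia : G.degMatrix ℂ i j = 0 := Matrix.diagonal_apply_ne _ hij
      simp only [SimpleGraph.lapMatrix, Matrix.sub_apply, Matrix.add_apply, hdia,
        zero_sub, zero_add]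
      by_cases hadj : G.Adj i j
      · have := hsadj i j hadj
        simp only [SimpleGraph.adjMatrix_apply, if_pos hadj]
        calc s i * -1 * s j = -(s i * s j) := by ring
          _ = 1 := by rw [this]; ring
      · simp [hadj]
  -- S as a unit
  let U : (Matrix V V ℂ)ˣ := ⟨S, S, hSS, hSS⟩
  have hUinv : (↑U⁻¹ : Matrix V V ℂ) = S := rfl
  have hexp : transitionMatrixPlus G t = S * transitionMatrix G t * S := by
    rw [transitionMatrixPlus, transitionMatrix, ← hconj]
    have h1 : (Complex.I * (t : ℂ)) • (S * G.lapMatrix ℂ * S)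
        = S * ((Complex.I * (t : ℂ)) • G.lapMatrix ℂ) * S := by
      rw [mul_smul_comm, smul_mul_assoc]
    rw [h1]
    have := Matrix.exp_units_conj U ((Complex.I * (t : ℂ)) • G.lapMatrix ℂ)
    rw [hUinv] at this
    exact this
  -- action of S on states
  have hSpair : ∀ (x y : V), x ∈ B₁ → y ∈ B₂ → S.mulVec (pairState x y) = plusState x y := by
    intro x y hx hy
    have hyn : y ∉ B₁ := fun h => hnot12 y h hy
    funext v
    rw [hSdef, Matrix.mulVec_diagonal]
    simp only [pairState, plusState, Pi.sub_apply, Pi.add_apply]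
    by_cases hvx : v = x
    · subst hvx
      have hvy : v ≠ y := fun h => hnot12 v hx (h ▸ hy)
      simp [Pi.single_apply, hvy, hs, hx]
    · by_cases hvy : v = y
      · subst hvy
        simp [Pi.single_apply, hvx, hs, hyn]
      · simp [Pi.single_apply, hvx, hvy]
  have hSplus : ∀ (x y : V), x ∈ B₁ → y ∈ B₂ → S.mulVec (plusState x y) = pairState x y := by
    intro x y hx hy
    have hyn : y ∉ B₁ := fun h => hnot12 y h hy
    funext v
    rw [hSdef, Matrix.mulVec_diagonal]
    simp only [pairState, plusState, Pi.sub_apply, Pi.add_apply]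
    by_cases hvx : v = x
    · subst hvx
      have hvy : v ≠ y := fun h => hnot12 v hx (h ▸ hy)
      simp [Pi.single_apply, hvy, hs, hx]
    · by_cases hvy : v = y
      · subst hvy
        simp [Pi.single_apply, hvx, hs, hyn]
      · simp [Pi.single_apply, hvx, hvy]
  have key : ∀ (M : Matrix V V ℂ) (x : V → ℂ),
      (S * M * S).mulVec (S.mulVec x) = S.mulVec (M.mulVec x) := by
    intro M x
    rw [Matrix.mulVec_mulVec, Matrix.mul_assoc (S * M), hSS, Matrix.mul_one,
      ← Matrix.mulVec_mulVec]
  constructor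
  · rintro ⟨γ, hγ, heq⟩
    refine ⟨γ, hγ, ?_⟩
    rw [hexp, ← hSpair a b ha hb, key, heq, Matrix.mulVec_smul, hSpair c d hc hd]
  · rintro ⟨γ, hγ, heq⟩
    refine ⟨γ, hγ, ?_⟩
    have hE : transitionMatrix G t = S * transitionMatrixPlus G t * S := by
      rw [hexp]
      rw [← Matrix.mul_assoc, ← Matrix.mul_assoc, hSS, Matrix.one_mul,
        Matrix.mul_assoc, hSS, Matrix.mul_one]
    rw [hE, ← hSplus a b ha hb, key, heq, Matrix.mulVec_smul, hSplus c d hc hd]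
end
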